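/- arXiv:2107.02550 — 2 statements merged into one kernel-verified Lean document; each statement's English description precedes it below -/
import Mathlib

section
/- Fix a widths vector n = (n₀, …, n_L), radial rescaling activations ρ_i = h_i^{(n_i)}, a finite batch of training data {(x_j, y_j)} ⊂ ℝ^{n₀} × ℝ^{n_L}, and a cost function C : ℝ^{n_L} × ℝ^{n_L} → ℝ. Let 𝓛 : Param(n) → ℝ be the loss function 𝓛(W, b) = Σ_j C(F_{(W,b,ρ)}(x_j), y_j), and assume 𝓛 is differentiable. Let γ be the gradient descent map on Param(n) with learning rate η > 0, γ(W, b) = (W, b) − η ∇_{(W,b)} 𝓛. Then for every Q ∈ O(n^hid) = O(n₁) × ⋯ × O(n_{L−1}), every (W, b) ∈ Param(n), and every k ≥ 0: γᵏ(Q·(W, b)) = Q·γᵏ(W, b). Equivalently, γᵏ(W, b) = Q · γᵏ(Q^{−1}·(W, b)). -/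
open scoped Classical
open Metric Set
open scoped Matrix

noncomputable section

abbrev Euc (n : ℕ) := EuclideanSpace ℝ (Fin n)

def mulVecE {m n : ℕ} (W : Matrix (Fin m) (Fin n) ℝ) (v : Euc n) : Euc m :=
  WithLp.toLp 2 (fun j => ∑ k, W j k * v k)

/-- The radial rescaling function h⁽ᵏ⁾ : ℝᵏ → ℝᵏ associated to h : ℝ → ℝ. -/
def radialRescale {n : ℕ} (h : ℝ → ℝ) (v : Euc n) : Euc n :=
  if v = 0 then 0 else (h ‖v‖ / ‖v‖) • v

/-- Partial feedforward functions: F₀ = id, F_{i+1}(x) = ρᵢ(Wᵢ Fᵢ(x) + bᵢ). -/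
def feedforward (width : ℕ → ℕ)
    (W : ∀ i : ℕ, Matrix (Fin (width (i+1))) (Fin (width i)) ℝ)
    (b : ∀ i : ℕ, Euc (width (i+1)))
    (ρ : ∀ i : ℕ, Euc (width (i+1)) → Euc (width (i+1))) :
    (i : ℕ) → Euc (width 0) → Euc (width i)
  | 0 => fun x => x
  | (i+1) => fun x => ρ i (mulVecE (W i) (feedforward width W b ρ i x) + b i)

/-- The parameter space Param(n) of all weights and biases of a network with L layers,
as a Euclidean (inner product) space: for layer i+1 there is a matrix coordinate for
every pair (j, k) and a bias coordinate for every j. -/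
abbrev ParamSpace (width : ℕ → ℕ) (L : ℕ) :=
  PiLp 2 (fun i : Fin L =>
    EuclideanSpace ℝ
      ((Fin (width ((i : ℕ) + 1)) × Fin (width (i : ℕ))) ⊕ Fin (width ((i : ℕ) + 1))))

/-- The weight matrices of a parameter vector (0 beyond layer L). -/
def weightsOf {width : ℕ → ℕ} {L : ℕ} (θ : ParamSpace width L) :
    ∀ i : ℕ, Matrix (Fin (width (i+1))) (Fin (width i)) ℝ :=
  fun i => if hi : i < L then (fun j k => θ ⟨i, hi⟩ (Sum.inl (j, k))) else 0

/-- The bias vectors of a parameter vector (0 beyond layer L). -/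
def biasesOf {width : ℕ → ℕ} {L : ℕ} (θ : ParamSpace width L) :
    ∀ i : ℕ, Euc (width (i+1)) :=
  fun i => if hi : i < L then WithLp.toLp 2 (fun j => θ ⟨i, hi⟩ (Sum.inr j)) else 0

/-- The loss function 𝓛(W, b) = ∑ⱼ C(F_{(W,b,ρ)}(xⱼ), yⱼ) on Param(n), for the batch
of training data (xⱼ, yⱼ), cost function C, and radial rescaling activations
ρᵢ = hᵢ^{(nᵢ)}. -/
def lossOf (width : ℕ → ℕ) (L : ℕ) (h : ℕ → ℝ → ℝ) {J : ℕ}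
    (x : Fin J → Euc (width 0)) (y : Fin J → Euc (width L))
    (C : Euc (width L) → Euc (width L) → ℝ)
    (θ : ParamSpace width L) : ℝ :=
  ∑ j, C (feedforward width (weightsOf θ) (biasesOf θ)
            (fun i => radialRescale (h i)) L (x j)) (y j)

/-- The change-of-basis action of a family of matrices Q on Param(n):
Wᵢ ↦ Qᵢ Wᵢ Qᵢ₋₁⁻¹ and bᵢ ↦ Qᵢ bᵢ. -/
def actOn {width : ℕ → ℕ} {L : ℕ}
    (Q : ∀ i : ℕ, Matrix (Fin (width i)) (Fin (width i)) ℝ)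
    (θ : ParamSpace width L) : ParamSpace width L :=
  WithLp.toLp 2 fun i => WithLp.toLp 2 fun s =>
    match s with
    | Sum.inl jk => (Q ((i : ℕ) + 1) * weightsOf θ (i : ℕ) * (Q (i : ℕ))⁻¹) jk.1 jk.2
    | Sum.inr j => mulVecE (Q ((i : ℕ) + 1)) (biasesOf θ (i : ℕ)) j

/-! ### Auxiliary lemmas -/

lemma mulVecE_one {m : ℕ} (v : Euc m) : mulVecE 1 v = v := by
  ext j
  simp [mulVecE, Matrix.one_apply]

lemma mulVecE_mul {m n p : ℕ} (A : Matrix (Fin m) (Fin n) ℝ)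
    (B : Matrix (Fin n) (Fin p) ℝ) (v : Euc p) :
    mulVecE (A * B) v = mulVecE A (mulVecE B v) := by
  ext j
  simp only [mulVecE, Matrix.mul_apply]
  simp_rw [Finset.sum_mul, Finset.mul_sum, mul_assoc]
  exact Finset.sum_comm

lemma mulVecE_add {m n : ℕ} (A : Matrix (Fin m) (Fin n) ℝ) (u v : Euc n) :
    mulVecE A (u + v) = mulVecE A u + mulVecE A v := by
  ext j
  simp [mulVecE, PiLp.add_apply, mul_add, Finset.sum_add_distrib]

lemma mulVecE_smul {m n : ℕ} (A : Matrix (Fin m) (Fin n) ℝ) (c : ℝ) (v : Euc n) :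
    mulVecE A (c • v) = c • mulVecE A v := by
  ext j
  simp only [mulVecE, PiLp.smul_apply, smul_eq_mul, Finset.mul_sum]
  exact Finset.sum_congr rfl fun k _ => by ring

lemma mulVecE_zero {m n : ℕ} (A : Matrix (Fin m) (Fin n) ℝ) :
    mulVecE A (0 : Euc n) = 0 := by
  ext j
  simp [mulVecE]

lemma sum_mul_orth {m : ℕ} {Q : Matrix (Fin m) (Fin m) ℝ} (hQ : Qᵀ * Q = 1)
    (u w : Fin m → ℝ) :
    ∑ j, (∑ k, Q j k * u k) * (∑ l, Q j l * w l) = ∑ k, u k * w k := by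
  have key : ∀ k l, ∑ j, Q j k * Q j l = (1 : Matrix (Fin m) (Fin m) ℝ) k l := by
    intro k l
    rw [← hQ]
    simp [Matrix.mul_apply, Matrix.transpose_apply]
  calc ∑ j, (∑ k, Q j k * u k) * (∑ l, Q j l * w l)
      = ∑ j, ∑ k, ∑ l, (Q j k * Q j l) * (u k * w l) := by
        refine Finset.sum_congr rfl fun j _ => ?_
        rw [Finset.sum_mul_sum]
        exact Finset.sum_congr rfl fun k _ => Finset.sum_congr rfl fun l _ => by ring
    _ = ∑ k, ∑ l, (∑ j, Q j k * Q j l) * (u k * w l) := by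
        rw [Finset.sum_comm]
        refine Finset.sum_congr rfl fun k _ => ?_
        rw [Finset.sum_comm]
        simp [Finset.sum_mul]
    _ = ∑ k, u k * w k := by
        simp_rw [key]
        simp [Matrix.one_apply]

lemma norm_mulVecE {m : ℕ} {Q : Matrix (Fin m) (Fin m) ℝ} (hQ : Qᵀ * Q = 1)
    (v : Euc m) : ‖mulVecE Q v‖ = ‖v‖ := by
  have h2 : ∀ w : Euc m, ‖w‖ = Real.sqrt (∑ j, w j * w j) := by
    intro w
    rw [EuclideanSpace.norm_eq]
    congr 1
    exact Finset.sum_congr rfl fun j _ => by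
      rw [Real.norm_eq_abs, pow_two, abs_mul_abs_self]
  rw [h2, h2]
  congr 1
  exact sum_mul_orth hQ v v

lemma mulVecE_eq_zero_iff {m : ℕ} {Q : Matrix (Fin m) (Fin m) ℝ} (hQ : Qᵀ * Q = 1)
    (v : Euc m) : mulVecE Q v = 0 ↔ v = 0 := by
  constructor
  · intro hv
    have := congrArg (mulVecE Qᵀ) hv
    rwa [← mulVecE_mul, hQ, mulVecE_one, mulVecE_zero] at this
  · rintro rfl
    exact mulVecE_zero _

lemma radialRescale_mulVecE {m : ℕ} (h : ℝ → ℝ) {Q : Matrix (Fin m) (Fin m) ℝ}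
    (hQ : Qᵀ * Q = 1) (v : Euc m) :
    radialRescale h (mulVecE Q v) = mulVecE Q (radialRescale h v) := by
  by_cases hv : v = 0
  · subst hv
    simp [radialRescale, mulVecE_zero]
  · have hqv : mulVecE Q v ≠ 0 := fun hc => hv ((mulVecE_eq_zero_iff hQ v).mp hc)
    rw [radialRescale, radialRescale, if_neg hv, if_neg hqv, norm_mulVecE hQ,
      mulVecE_smul]

section Act

lemma weightsOf_lt {width : ℕ → ℕ} {L : ℕ} (θ : ParamSpace width L) {i : ℕ} (hi : i < L) :
    weightsOf θ i = fun j k => θ ⟨i, hi⟩ (Sum.inl (j, k)) := by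
  simp only [weightsOf]
  exact dif_pos hi

lemma biasesOf_lt {width : ℕ → ℕ} {L : ℕ} (θ : ParamSpace width L) {i : ℕ} (hi : i < L) :
    biasesOf θ i = fun j => θ ⟨i, hi⟩ (Sum.inr j) := by
  simp only [biasesOf]
  rw [dif_pos hi]


variable {width : ℕ → ℕ} {L : ℕ}

lemma weightsOf_actOn (Q : ∀ i : ℕ, Matrix (Fin (width i)) (Fin (width i)) ℝ)
    (θ : ParamSpace width L) {i : ℕ} (hi : i < L) :
    weightsOf (actOn Q θ) i = Q (i+1) * weightsOf θ i * (Q i)⁻¹ := by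
  ext j k
  rw [weightsOf_lt (actOn Q θ) hi]
  rfl

lemma biasesOf_actOn (Q : ∀ i : ℕ, Matrix (Fin (width i)) (Fin (width i)) ℝ)
    (θ : ParamSpace width L) {i : ℕ} (hi : i < L) :
    biasesOf (actOn Q θ) i = mulVecE (Q (i+1)) (biasesOf θ i) := by
  ext j
  rw [biasesOf_lt (actOn Q θ) hi]
  rfl

lemma feedforward_actOn (h : ℕ → ℝ → ℝ)
    (Q : ∀ i : ℕ, Matrix (Fin (width i)) (Fin (width i)) ℝ)
    (hQt : ∀ i, (Q i)ᵀ * Q i = 1) (hQi : ∀ i, (Q i)⁻¹ = (Q i)ᵀ)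
    (hQ0 : Q 0 = 1) (θ : ParamSpace width L) :
    ∀ i : ℕ, i ≤ L → ∀ v : Euc (width 0),
      feedforward width (weightsOf (actOn Q θ)) (biasesOf (actOn Q θ))
          (fun i => radialRescale (h i)) i v
        = mulVecE (Q i)
            (feedforward width (weightsOf θ) (biasesOf θ)
              (fun i => radialRescale (h i)) i v) := by
  intro i
  induction i with
  | zero =>
    intro _ v
    simp [feedforward, hQ0, mulVecE_one]
  | succ i ih =>
    intro hi v
    have hi' : i < L := Nat.lt_of_succ_le hi
    simp only [feedforward]
    rw [ih (Nat.le_of_lt hi') v, weightsOf_actOn Q θ hi', biasesOf_actOn Q θ hi',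
      hQi i,
      mulVecE_mul (Q (i+1) * weightsOf θ i) ((Q i)ᵀ) _,
      ← mulVecE_mul ((Q i)ᵀ) (Q i) _, hQt i, mulVecE_one,
      mulVecE_mul (Q (i+1)) (weightsOf θ i) _, ← mulVecE_add]
    exact radialRescale_mulVecE _ (hQt (i+1)) _

lemma lossOf_actOn (h : ℕ → ℝ → ℝ) {J : ℕ}
    (x : Fin J → Euc (width 0)) (y : Fin J → Euc (width L))
    (C : Euc (width L) → Euc (width L) → ℝ)
    (Q : ∀ i : ℕ, Matrix (Fin (width i)) (Fin (width i)) ℝ)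
    (hQt : ∀ i, (Q i)ᵀ * Q i = 1) (hQi : ∀ i, (Q i)⁻¹ = (Q i)ᵀ)
    (hQ0 : Q 0 = 1) (hQL : Q L = 1) (θ : ParamSpace width L) :
    lossOf width L h x y C (actOn Q θ) = lossOf width L h x y C θ := by
  unfold lossOf
  refine Finset.sum_congr rfl fun j _ => ?_
  rw [feedforward_actOn h Q hQt hQi hQ0 θ L le_rfl (x j), hQL, mulVecE_one]

lemma weightsOf_add (θ ψ : ParamSpace width L) (i : ℕ) :
    weightsOf (θ + ψ) i = weightsOf θ i + weightsOf ψ i := by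
  unfold weightsOf
  by_cases hi : i < L
  · simp only [hi, ↓reduceDIte]
    rfl
  · simp only [hi, ↓reduceDIte, add_zero]

lemma weightsOf_smul (c : ℝ) (θ : ParamSpace width L) (i : ℕ) :
    weightsOf (c • θ) i = c • weightsOf θ i := by
  unfold weightsOf
  by_cases hi : i < L
  · simp only [hi, ↓reduceDIte]
    rfl
  · simp only [hi, ↓reduceDIte, smul_zero]

lemma biasesOf_add (θ ψ : ParamSpace width L) (i : ℕ) :
    biasesOf (θ + ψ) i = biasesOf θ i + biasesOf ψ i := by
  unfold biasesOf
  by_cases hi : i < L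
  · simp only [dif_pos hi]
    rfl
  · simp only [dif_neg hi, add_zero]

lemma biasesOf_smul (c : ℝ) (θ : ParamSpace width L) (i : ℕ) :
    biasesOf (c • θ) i = c • biasesOf θ i := by
  unfold biasesOf
  by_cases hi : i < L
  · simp only [dif_pos hi]
    rfl
  · simp only [dif_neg hi, smul_zero]

lemma actOn_add (Q : ∀ i : ℕ, Matrix (Fin (width i)) (Fin (width i)) ℝ)
    (θ ψ : ParamSpace width L) :
    actOn Q (θ + ψ) = actOn Q θ + actOn Q ψ := by
  ext i s
  cases s with
  | inl jk =>
    show (Q (↑i+1) * weightsOf (θ + ψ) ↑i * (Q ↑i)⁻¹) jk.1 jk.2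
        = (Q (↑i+1) * weightsOf θ ↑i * (Q ↑i)⁻¹) jk.1 jk.2
          + (Q (↑i+1) * weightsOf ψ ↑i * (Q ↑i)⁻¹) jk.1 jk.2
    rw [weightsOf_add, Matrix.mul_add, Matrix.add_mul]
    rfl
  | inr j =>
    show mulVecE (Q (↑i+1)) (biasesOf (θ + ψ) ↑i) j
        = mulVecE (Q (↑i+1)) (biasesOf θ ↑i) j + mulVecE (Q (↑i+1)) (biasesOf ψ ↑i) j
    rw [biasesOf_add, mulVecE_add]
    rfl

lemma actOn_smul (Q : ∀ i : ℕ, Matrix (Fin (width i)) (Fin (width i)) ℝ)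
    (c : ℝ) (θ : ParamSpace width L) :
    actOn Q (c • θ) = c • actOn Q θ := by
  ext i s
  cases s with
  | inl jk =>
    show (Q (↑i+1) * weightsOf (c • θ) ↑i * (Q ↑i)⁻¹) jk.1 jk.2
        = c • (Q (↑i+1) * weightsOf θ ↑i * (Q ↑i)⁻¹) jk.1 jk.2
    rw [weightsOf_smul, Matrix.mul_smul, Matrix.smul_mul]
    rfl
  | inr j =>
    show mulVecE (Q (↑i+1)) (biasesOf (c • θ) ↑i) j
        = c • mulVecE (Q (↑i+1)) (biasesOf θ ↑i) j
    rw [biasesOf_smul, mulVecE_smul]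
    rfl

lemma actOn_transpose_actOn (Q : ∀ i : ℕ, Matrix (Fin (width i)) (Fin (width i)) ℝ)
    (hQt : ∀ i, (Q i)ᵀ * Q i = 1) (hQQt : ∀ i, Q i * (Q i)ᵀ = 1)
    (θ : ParamSpace width L) :
    actOn (fun i => (Q i)ᵀ) (actOn Q θ) = θ := by
  ext i s
  have hi : (i : ℕ) < L := i.isLt
  have hQinv : ∀ j, (Q j)⁻¹ = (Q j)ᵀ := fun j => Matrix.inv_eq_left_inv (hQt j)
  have hQTinv : ∀ j, ((Q j)ᵀ)⁻¹ = Q j := fun j => Matrix.inv_eq_left_inv (hQQt j)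
  cases s with
  | inl jk =>
    show ((Q (↑i+1))ᵀ * weightsOf (actOn Q θ) ↑i * ((Q ↑i)ᵀ)⁻¹) jk.1 jk.2 = θ i (Sum.inl jk)
    rw [weightsOf_actOn Q θ hi, hQTinv, hQinv]
    have : (Q (↑i+1))ᵀ * (Q (↑i+1) * weightsOf θ ↑i * (Q ↑i)ᵀ) * Q ↑i
        = weightsOf θ ↑i := by
      rw [Matrix.mul_assoc (Q (↑i+1)) (weightsOf θ ↑i) ((Q ↑i)ᵀ),
        ← Matrix.mul_assoc ((Q (↑i+1))ᵀ) (Q (↑i+1)) (weightsOf θ ↑i * (Q ↑i)ᵀ),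
        hQt, Matrix.one_mul, Matrix.mul_assoc (weightsOf θ ↑i) ((Q ↑i)ᵀ) (Q ↑i),
        hQt, Matrix.mul_one]
    rw [this, weightsOf_lt θ hi]
  | inr j =>
    show mulVecE ((Q (↑i+1))ᵀ) (biasesOf (actOn Q θ) ↑i) j = θ i (Sum.inr j)
    rw [biasesOf_actOn Q θ hi, ← mulVecE_mul, hQt, mulVecE_one, biasesOf_lt θ hi]

lemma frob_left {m n : ℕ} {Q : Matrix (Fin m) (Fin m) ℝ} (hQ : Qᵀ * Q = 1)
    (A B : Matrix (Fin m) (Fin n) ℝ) :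
    ∑ j, ∑ k, (Q * A) j k * (Q * B) j k = ∑ j, ∑ k, A j k * B j k := by
  calc ∑ j, ∑ k, (Q * A) j k * (Q * B) j k
      = ∑ k, ∑ j, (Q * A) j k * (Q * B) j k := Finset.sum_comm
    _ = ∑ k, ∑ l, A l k * B l k := by
        refine Finset.sum_congr rfl fun k _ => ?_
        have := sum_mul_orth hQ (fun l => A l k) (fun l => B l k)
        simpa [Matrix.mul_apply] using this
    _ = ∑ j, ∑ k, A j k * B j k := Finset.sum_comm

lemma frob_right {m n : ℕ} {R : Matrix (Fin n) (Fin n) ℝ} (hR : R * Rᵀ = 1)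
    (A B : Matrix (Fin m) (Fin n) ℝ) :
    ∑ j, ∑ k, (A * R) j k * (B * R) j k = ∑ j, ∑ k, A j k * B j k := by
  refine Finset.sum_congr rfl fun j _ => ?_
  have h' : (Rᵀ)ᵀ * Rᵀ = 1 := by rwa [Matrix.transpose_transpose]
  have := sum_mul_orth h' (fun l => A j l) (fun l => B j l)
  simp only [Matrix.transpose_apply] at this
  calc ∑ k, (A * R) j k * (B * R) j k
      = ∑ k, (∑ l, R l k * A j l) * (∑ l, R l k * B j l) := by
        refine Finset.sum_congr rfl fun k _ => ?_
        simp [Matrix.mul_apply, mul_comm]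
    _ = ∑ l, A j l * B j l := this

lemma inner_actOn (Q : ∀ i : ℕ, Matrix (Fin (width i)) (Fin (width i)) ℝ)
    (hQt : ∀ i, (Q i)ᵀ * Q i = 1) (hQQt : ∀ i, Q i * (Q i)ᵀ = 1)
    (θ ψ : ParamSpace width L) :
    (inner ℝ (actOn Q θ) (actOn Q ψ) : ℝ) = inner ℝ θ ψ := by
  have hQinv : ∀ j, (Q j)⁻¹ = (Q j)ᵀ := fun j => Matrix.inv_eq_left_inv (hQt j)
  simp only [PiLp.inner_apply, RCLike.inner_apply', conj_trivial]
  refine Finset.sum_congr rfl fun i _ => ?_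
  have hi : (i : ℕ) < L := i.isLt
  rw [Fintype.sum_sum_type, Fintype.sum_sum_type]
  congr 1
  · rw [Fintype.sum_prod_type, Fintype.sum_prod_type]
    have e1 : ∀ (ξ : ParamSpace width L) jk,
        actOn Q ξ i (Sum.inl jk)
          = ((Q (↑i+1) * weightsOf ξ ↑i) * (Q ↑i)ᵀ) jk.1 jk.2 := by
      intro ξ jk
      show (Q (↑i+1) * weightsOf ξ ↑i * (Q ↑i)⁻¹) jk.1 jk.2
          = ((Q (↑i+1) * weightsOf ξ ↑i) * (Q ↑i)ᵀ) jk.1 jk.2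
      rw [hQinv]
    calc ∑ j, ∑ k, actOn Q θ i (Sum.inl (j, k)) * actOn Q ψ i (Sum.inl (j, k))
        = ∑ j, ∑ k, ((Q (↑i+1) * weightsOf θ ↑i) * (Q ↑i)ᵀ) j k
            * ((Q (↑i+1) * weightsOf ψ ↑i) * (Q ↑i)ᵀ) j k := by
          refine Finset.sum_congr rfl fun j _ => Finset.sum_congr rfl fun k _ => ?_
          rw [e1 θ (j, k), e1 ψ (j, k)]
      _ = ∑ j, ∑ k, (Q (↑i+1) * weightsOf θ ↑i) j k
            * (Q (↑i+1) * weightsOf ψ ↑i) j k := by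
          refine frob_right ?_ _ _
          rw [Matrix.transpose_transpose]
          exact hQt ↑i
      _ = ∑ j, ∑ k, weightsOf θ ↑i j k * weightsOf ψ ↑i j k :=
          frob_left (hQt _) _ _
      _ = ∑ j, ∑ k, θ i (Sum.inl (j, k)) * ψ i (Sum.inl (j, k)) := by
          rw [weightsOf_lt θ hi, weightsOf_lt ψ hi]
  · have : ∀ (ξ : ParamSpace width L) j,
        actOn Q ξ i (Sum.inr j) = mulVecE (Q (↑i+1)) (biasesOf ξ ↑i) j := fun _ _ => rfl
    calc ∑ j, actOn Q θ i (Sum.inr j) * actOn Q ψ i (Sum.inr j)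
        = ∑ j, mulVecE (Q (↑i+1)) (biasesOf θ ↑i) j
            * mulVecE (Q (↑i+1)) (biasesOf ψ ↑i) j := by
          refine Finset.sum_congr rfl fun j _ => ?_
          rw [this θ j, this ψ j]
      _ = ∑ j, biasesOf θ ↑i j * biasesOf ψ ↑i j := sum_mul_orth (hQt _) _ _
      _ = ∑ j, θ i (Sum.inr j) * ψ i (Sum.inr j) := by
          rw [biasesOf_lt θ hi, biasesOf_lt ψ hi]

end Act

lemma gradient_comp_LIE {E : Type*} [NormedAddCommGroup E] [InnerProductSpace ℝ E]
    [CompleteSpace E] (f : E → ℝ) (hf : Differentiable ℝ f) (A : E ≃ₗᵢ[ℝ] E)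
    (hinv : ∀ ψ, f (A ψ) = f ψ) (θ : E) :
    gradient f (A θ) = A (gradient f θ) := by
  have hcomp : f ∘ ⇑A = f := funext hinv
  have hfder : ∀ v, fderiv ℝ f θ v = fderiv ℝ f (A θ) (A v) := by
    intro v
    conv_lhs => rw [← hcomp]
    rw [fderiv_comp θ (hf (A θ)) (A.differentiableAt)]
    simp [A.fderiv]
  have hgr : ∀ (g : E → ℝ) (z v : E), (inner ℝ (gradient g z) v : ℝ) = fderiv ℝ g z v := by
    intro g z v
    exact InnerProductSpace.toDual_symm_apply
  refine ext_inner_right ℝ fun w => ?_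
  obtain ⟨v, rfl⟩ : ∃ v, A v = w := ⟨A.symm w, A.apply_symm_apply w⟩
  calc (inner ℝ (gradient f (A θ)) (A v) : ℝ) = fderiv ℝ f (A θ) (A v) := hgr f (A θ) (A v)
    _ = fderiv ℝ f θ v := (hfder v).symm
    _ = inner ℝ (gradient f θ) v := (hgr f θ v).symm
    _ = inner ℝ (A (gradient f θ)) (A v) := (A.inner_map_map _ _).symm

/-- Gradient descent on Param(n) for the loss of a radial neural
network commutes with the change-of-basis action of O(nʰⁱᵈ) = O(n₁) × ⋯ × O(n_{L−1})
(families of orthogonal matrices Q with Q₀ = 1 and Q_L = 1):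
γᵏ(Q·θ) = Q·γᵏ(θ) for all k ≥ 0. -/
theorem gradient_descent_comm_action (L : ℕ) (width : ℕ → ℕ) (h : ℕ → ℝ → ℝ)
    {J : ℕ} (x : Fin J → Euc (width 0)) (y : Fin J → Euc (width L))
    (C : Euc (width L) → Euc (width L) → ℝ)
    (hdiff : Differentiable ℝ (lossOf width L h x y C))
    (η : ℝ) (hη : 0 < η)
    (Q : ∀ i : ℕ, Matrix (Fin (width i)) (Fin (width i)) ℝ)
    (hQ : ∀ i, Q i ∈ Matrix.orthogonalGroup (Fin (width i)) ℝ)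
    (hQ0 : Q 0 = 1) (hQL : Q L = 1)
    (θ : ParamSpace width L) (k : ℕ) :
    (fun ψ => ψ - η • gradient (lossOf width L h x y C) ψ)^[k] (actOn Q θ)
      = actOn Q ((fun ψ => ψ - η • gradient (lossOf width L h x y C) ψ)^[k] θ) := by
  have hstar : ∀ i, star (Q i) = (Q i)ᵀ := by
    intro i
    ext a b
    simp [Matrix.star_apply, Matrix.transpose_apply]
  have hQt : ∀ i, (Q i)ᵀ * Q i = 1 := by
    intro i
    have := (Matrix.mem_orthogonalGroup_iff' _ ℝ).mp (hQ i)
    exact this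
  have hQQt : ∀ i, Q i * (Q i)ᵀ = 1 := by
    intro i
    have := (Matrix.mem_orthogonalGroup_iff _ ℝ).mp (hQ i)
    exact this
  have hQinv : ∀ i, (Q i)⁻¹ = (Q i)ᵀ := fun i => Matrix.inv_eq_left_inv (hQt i)
  have hQTt : ∀ i, ((Q i)ᵀ)ᵀ * (Q i)ᵀ = 1 := by
    intro i; rw [Matrix.transpose_transpose]; exact hQQt i
  set f := lossOf width L h x y C with hf
  let Aeq : ParamSpace width L ≃ₗ[ℝ] ParamSpace width L :=
    { toFun := actOn Q
      invFun := actOn (fun i => (Q i)ᵀ)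
      map_add' := actOn_add Q
      map_smul' := actOn_smul Q
      left_inv := actOn_transpose_actOn Q hQt hQQt
      right_inv := by
        intro ψ
        have := actOn_transpose_actOn (width := width) (L := L)
          (fun i => (Q i)ᵀ) hQTt
          (fun i => by rw [Matrix.transpose_transpose]; exact hQt i) ψ
        simpa [Matrix.transpose_transpose] using this }
  let A : ParamSpace width L ≃ₗᵢ[ℝ] ParamSpace width L :=
    Aeq.isometryOfInner (fun θ ψ => inner_actOn Q hQt hQQt θ ψ)
  have hco : ⇑A = actOn Q := rfl
  have hloss : ∀ ψ, f (A ψ) = f ψ := by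
    intro ψ
    rw [hco]
    exact lossOf_actOn h x y C Q hQt hQinv hQ0 hQL ψ
  have hgrad : ∀ ψ, gradient f (actOn Q ψ) = actOn Q (gradient f ψ) := by
    intro ψ
    have := gradient_comp_LIE f hdiff A hloss ψ
    rwa [hco] at this
  have hstep : ∀ ψ, actOn Q ψ - η • gradient f (actOn Q ψ)
      = actOn Q (ψ - η • gradient f ψ) := by
    intro ψ
    rw [hgrad ψ, ← hco, ← map_smul A, ← map_sub A]
  induction k with
  | zero => simp
  | succ k ih =>
    rw [Function.iterate_succ_apply', Function.iterate_succ_apply', ih]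
    exact hstep _

end
end

section
/- Fix a widths vector n = (n₀, …, n_L) with reduced widths vector n^red, and radial rescaling activations ρ_i = h_i^{(n_i)} with restrictions ρ^red_i = h_i^{(n^red_i)}. Let (W, b) ∈ Param(n) belong to the interpolating subspace Param^int(n), i.e., for each i the last n_i − n^red_i entries of b_i vanish and the bottom-left (n_i − n^red_i) × n^red_{i−1} block of W_i vanishes. Let (V, c) ∈ Param(n^red) be obtained by extracting from each b_i its first n^red_i entries and from each W_i its top-left n^red_i × n^red_{i−1} block. Then the feedforward function of the radial neural network (W, b, ρ) equals the feedforward function of the radial neural network (V, c, ρ^red). -/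
open scoped Classical
open Metric Set

noncomputable section

/-- The reduced widths vector: nʳᵉᵈ₀ = n₀, nʳᵉᵈᵢ = min(nᵢ, nʳᵉᵈ_{i−1} + 1) for
0 < i < L, and nʳᵉᵈ_L = n_L. -/
def reducedWidth (width : ℕ → ℕ) (L : ℕ) : ℕ → ℕ
  | 0 => width 0
  | (i+1) => if i + 1 < L then min (width (i+1)) (reducedWidth width L i + 1) else width (i+1)

lemma reducedWidth_le (width : ℕ → ℕ) (L : ℕ) (i : ℕ) :
    reducedWidth width L i ≤ width i := by
  cases i with
  | zero => simp [reducedWidth]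
  | succ i =>
    rw [reducedWidth]
    split
    · exact min_le_left _ _
    · exact le_rfl

/-- The standard inclusion ℝᵏ ↪ ℝˡ into the first k coordinates. -/
def incl (k l : ℕ) (v : Euc k) : Euc l :=
  WithLp.toLp 2 (fun j => if h : (j : ℕ) < k then v ⟨j, h⟩ else 0)

lemma incl_self (k : ℕ) (v : Euc k) : incl k k v = v := by
  ext j
  simp [incl, j.isLt]

lemma sum_range_eq_of_le {k l : ℕ} (hkl : k ≤ l) (F : ℕ → ℝ)
    (hF : ∀ j, k ≤ j → F j = 0) :
    ∑ j ∈ Finset.range l, F j = ∑ j ∈ Finset.range k, F j := by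
  refine (Finset.sum_subset (Finset.range_subset_range.2 hkl) ?_).symm
  intro j _ hj
  exact hF j (le_of_not_gt (by simpa using hj))

lemma incl_smul {k l : ℕ} (c : ℝ) (v : Euc k) :
    incl k l (c • v) = c • incl k l v := by
  ext j
  simp only [incl, PiLp.smul_apply, smul_eq_mul, PiLp.toLp_apply]
  split <;> simp

lemma incl_eq_zero_iff {k l : ℕ} (hkl : k ≤ l) (v : Euc k) :
    incl k l v = 0 ↔ v = 0 := by
  constructor
  · intro hv
    ext j
    have := congrArg (fun w : Euc l => w ⟨j, lt_of_lt_of_le j.isLt hkl⟩) hv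
    simpa [incl, j.isLt] using this
  · intro hv
    ext j
    simp [incl, hv]

lemma norm_incl {k l : ℕ} (hkl : k ≤ l) (v : Euc k) :
    ‖incl k l v‖ = ‖v‖ := by
  rw [EuclideanSpace.norm_eq, EuclideanSpace.norm_eq]
  congr 1
  set F : ℕ → ℝ := fun j => if h : j < k then ‖v ⟨j, h⟩‖ ^ 2 else 0 with hFdef
  have h1 : ∑ j : Fin l, ‖incl k l v j‖ ^ 2 = ∑ j ∈ Finset.range l, F j := by
    rw [← Fin.sum_univ_eq_sum_range F l]
    refine Finset.sum_congr rfl fun j _ => ?_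
    simp only [incl, hFdef]
    split <;> simp
  have h2 : ∑ j : Fin k, ‖v j‖ ^ 2 = ∑ j ∈ Finset.range k, F j := by
    rw [← Fin.sum_univ_eq_sum_range F k]
    refine Finset.sum_congr rfl fun j _ => ?_
    simp [hFdef, j.isLt]
  rw [h1, h2, sum_range_eq_of_le hkl]
  intro j hj
  simp only [hFdef]
  rw [dif_neg (not_lt.2 hj)]

lemma radialRescale_incl {k l : ℕ} (hkl : k ≤ l) (g : ℝ → ℝ) (v : Euc k) :
    radialRescale g (incl k l v) = incl k l (radialRescale g v) := by
  unfold radialRescale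
  by_cases hv : v = 0
  · simp [hv, (incl_eq_zero_iff hkl (0 : Euc k)).2 rfl]
  · rw [if_neg hv, if_neg (fun hh => hv ((incl_eq_zero_iff hkl v).1 hh)),
      norm_incl hkl, incl_smul]

lemma sum_mul_incl {k l : ℕ} (hkl : k ≤ l) (f : Fin l → ℝ) (v : Euc k) :
    ∑ j : Fin l, f j * incl k l v j
      = ∑ j : Fin k, f (Fin.castLE hkl j) * v j := by
  set F : ℕ → ℝ := fun j =>
    (if h : j < l then f ⟨j, h⟩ else 0) * (if h : j < k then v ⟨j, h⟩ else 0)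
    with hFdef
  have h1 : ∑ j : Fin l, f j * incl k l v j = ∑ j ∈ Finset.range l, F j := by
    rw [← Fin.sum_univ_eq_sum_range F l]
    refine Finset.sum_congr rfl fun j _ => ?_
    simp [hFdef, incl, j.isLt]
  have h2 : ∑ j : Fin k, f (Fin.castLE hkl j) * v j = ∑ j ∈ Finset.range k, F j := by
    rw [← Fin.sum_univ_eq_sum_range F k]
    refine Finset.sum_congr rfl fun j _ => ?_
    have hjl : (j : ℕ) < l := lt_of_lt_of_le j.isLt hkl
    simp only [hFdef, dif_pos j.isLt, dif_pos hjl]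
    congr 1
  rw [h1, h2, sum_range_eq_of_le hkl]
  intro j hj
  simp only [hFdef]
  rw [dif_neg (not_lt.2 hj), mul_zero]

/-- Suppose the parameters (W, b) lie in the interpolating subspace
Paramⁱⁿᵗ(n): for each layer, the last nᵢ − nʳᵉᵈᵢ entries of bᵢ vanish and the
bottom-left (nᵢ − nʳᵉᵈᵢ) × nʳᵉᵈ_{i−1} block of Wᵢ vanishes.  Let (V, c) be obtained
by extracting the first nʳᵉᵈᵢ entries of bᵢ and the top-left nʳᵉᵈᵢ × nʳᵉᵈ_{i−1}
block of Wᵢ.  Then the radial neural networks (W, b, ρ) and (V, c, ρʳᵉᵈ) have the same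
feedforward function (nʳᵉᵈ_L = n_L, identified via the standard inclusion). -/
theorem interpolating_feedforward_eq (L : ℕ) (width : ℕ → ℕ)
    (W : ∀ i : ℕ, Matrix (Fin (width (i+1))) (Fin (width i)) ℝ)
    (b : ∀ i : ℕ, Euc (width (i+1)))
    (h : ℕ → ℝ → ℝ)
    (hW : ∀ i < L, ∀ (j : Fin (width (i+1))) (k : Fin (width i)),
      reducedWidth width L (i+1) ≤ (j : ℕ) → (k : ℕ) < reducedWidth width L i →
        W i j k = 0)
    (hb : ∀ i < L, ∀ j : Fin (width (i+1)),
      reducedWidth width L (i+1) ≤ (j : ℕ) → b i j = 0) :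
    ∀ x : Euc (width 0),
      feedforward width W b (fun i => radialRescale (h i)) L x
        = incl (reducedWidth width L L) (width L)
            (feedforward (reducedWidth width L)
              (fun i => fun j k =>
                W i (Fin.castLE (reducedWidth_le width L (i+1)) j)
                    (Fin.castLE (reducedWidth_le width L i) k))
              (fun i => WithLp.toLp 2 (fun j => b i (Fin.castLE (reducedWidth_le width L (i+1)) j)))
              (fun i => radialRescale (h i)) L x) := by
  intro x
  set r : ℕ → ℕ := reducedWidth width L with hr
  set V : ∀ i : ℕ, Matrix (Fin (r (i+1))) (Fin (r i)) ℝ :=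
    fun i => fun j k =>
      W i (Fin.castLE (reducedWidth_le width L (i+1)) j)
          (Fin.castLE (reducedWidth_le width L i) k) with hV
  set c : ∀ i : ℕ, Euc (r (i+1)) :=
    fun i => WithLp.toLp 2 (fun j => b i (Fin.castLE (reducedWidth_le width L (i+1)) j)) with hc
  suffices H : ∀ i, i ≤ L →
      feedforward width W b (fun i => radialRescale (h i)) i x
        = incl (r i) (width i)
            (feedforward r V c (fun i => radialRescale (h i)) i x) from H L le_rfl
  intro i hi
  induction i with
  | zero =>
    exact (incl_self (width 0) x).symm
  | succ i ih =>
    have hiL : i < L := lt_of_lt_of_le (Nat.lt_succ_self i) hi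
    have key : ∀ v : Euc (r i),
        mulVecE (W i) (incl (r i) (width i) v) + b i
          = incl (r (i+1)) (width (i+1)) (mulVecE (V i) v + c i) := by
      intro v
      ext j
      simp only [PiLp.add_apply, mulVecE, incl, PiLp.toLp_apply]
      by_cases hj : (j : ℕ) < r (i+1)
      · rw [dif_pos hj]
        have hs := sum_mul_incl (reducedWidth_le width L i) (fun k => W i j k) v
        simp only [incl, PiLp.toLp_apply] at hs
        rw [hs]
        have hcj : Fin.castLE (reducedWidth_le width L (i+1)) ⟨(j : ℕ), hj⟩ = j :=
          Fin.ext rfl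
        simp only [hV, hc, hcj, PiLp.toLp_apply]
        congr 1
      · rw [dif_neg hj]
        have hbz : b i j = 0 := hb i hiL j (le_of_not_gt hj)
        rw [hbz, add_zero]
        refine Finset.sum_eq_zero fun k _ => ?_
        by_cases hk : (k : ℕ) < r i
        · rw [hW i hiL j k (le_of_not_gt hj) hk, zero_mul]
        · rw [dif_neg hk, mul_zero]
    rw [show feedforward width W b (fun i => radialRescale (h i)) (i+1) x
          = radialRescale (h i) (mulVecE (W i)
              (feedforward width W b (fun i => radialRescale (h i)) i x) + b i) from rfl,
        show feedforward r V c (fun i => radialRescale (h i)) (i+1) x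
          = radialRescale (h i) (mulVecE (V i)
              (feedforward r V c (fun i => radialRescale (h i)) i x) + c i) from rfl,
        ih (le_of_lt hiL), key, radialRescale_incl (reducedWidth_le width L (i+1))]

end
end
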